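/- Let n ≥ 2 and 1 ≤ m ≤ n−1 be integers, V ⊆ ℝⁿ an open set, and δ : V → ℝ a C² function with ‖∇δ(x)‖ = 1 for all x ∈ V. Let K ≥ 0 and assume that for every x ∈ V: (i) for every m-dimensional linear subspace Λ contained in the hyperplane (∇δ(x))^⊥ = {v ∈ ℝⁿ : ∇δ(x)·v = 0}, one has tr_Λ Hess δ(x) ≥ 0; and (ii) for every finite orthonormal family v₁, …, vₖ of vectors in (∇δ(x))^⊥, one has Σᵢ Hess δ(x)(vᵢ, vᵢ) ≥ −K. Let h : ℝ → ℝ be a C² function such that h′(t) ≥ 0 and h″(t) ≥ K·h′(t) for every t in the image δ(V). Then h ∘ δ is m-plurisubharmonic on V, i.e., tr_Λ Hess(h∘δ)(x) ≥ 0 for every x ∈ V and every m-dimensional linear subspace Λ ⊆ ℝⁿ. -/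

import Mathlib

open RealInnerProductSpace

/-- The Hessian quadratic form of `ρ : ℝⁿ → ℝ` at `x`, evaluated on vectors `v, w`. -/
noncomputable def Hess {n : ℕ} (ρ : EuclideanSpace ℝ (Fin n) → ℝ)
    (x v w : EuclideanSpace ℝ (Fin n)) : ℝ :=
  fderiv ℝ (fun y => fderiv ℝ ρ y v) x w

open Finset in
theorem comb_core {N m : ℕ} (hm : 1 ≤ m) (hmN : m ≤ N)
    (K : ℝ) (hK : 0 ≤ K) (a : Fin N → ℝ)
    (H0 : ∀ S : Finset (Fin N), S.card = m → 0 ≤ ∑ j ∈ S, a j)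
    (HK : ∀ S : Finset (Fin N), -K ≤ ∑ j ∈ S, a j)
    (μ : Fin N → ℝ) (hμ0 : ∀ j, 0 ≤ μ j) (hμ1 : ∀ j, μ j ≤ 1)
    (hμm : ∑ j, μ j ≤ (m : ℝ)) :
    0 ≤ ∑ j, μ j * a j + K * ((m : ℝ) - ∑ j, μ j) := by
  classical
  set σ := Tuple.sort a with hσ
  have hmono : Monotone (a ∘ σ) := Tuple.monotone_sort a
  have hmlt : m - 1 < N := by omega
  set c : ℝ := a (σ ⟨m - 1, hmlt⟩) with hc
  set b : ℝ := min K c with hb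
  have hbK : b ≤ K := min_le_left _ _
  set S : Finset (Fin N) := Finset.univ.filter (fun j => a j < b) with hS
  have hmem : ∀ i : Fin N, σ i ∈ S → (i : ℕ) < m - 1 := by
    intro i hi
    by_contra hcon
    push_neg at hcon
    have h1 : c ≤ a (σ i) := hmono (show (⟨m-1,hmlt⟩ : Fin N) ≤ i from hcon)
    have hi' : a (σ i) < b := by simpa [hS] using hi
    have : b ≤ a (σ i) := le_trans (min_le_right _ _) h1
    linarith
  have hcard : S.card ≤ m - 1 := by
    have hsub : S ⊆ (Finset.univ.filter (fun i : Fin N => (i : ℕ) < m - 1)).image σ := by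
      intro j hj
      rcases σ.surjective j with ⟨i, rfl⟩
      exact Finset.mem_image.2 ⟨i, Finset.mem_filter.2 ⟨Finset.mem_univ _, hmem i hj⟩, rfl⟩
    have hval : ((Finset.univ.filter (fun i : Fin N => (i : ℕ) < m - 1)).image
        (fun i : Fin N => (i : ℕ))) ⊆ Finset.range (m - 1) := by
      intro k hk
      rcases Finset.mem_image.1 hk with ⟨i, hi, rfl⟩
      exact Finset.mem_range.2 (Finset.mem_filter.1 hi).2
    calc S.card ≤ _ := Finset.card_le_card hsub
      _ ≤ (Finset.univ.filter (fun i : Fin N => (i : ℕ) < m - 1)).card := Finset.card_image_le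
      _ = ((Finset.univ.filter (fun i : Fin N => (i : ℕ) < m - 1)).image
            (fun i : Fin N => (i : ℕ))).card := (Finset.card_image_of_injective _ Fin.val_injective).symm
      _ ≤ (Finset.range (m-1)).card := Finset.card_le_card hval
      _ = m - 1 := Finset.card_range _
  -- key sum estimate over S
  have hkey : ((S.card : ℝ) - m) * b ≤ ∑ j ∈ S, a j := by
    rcases le_or_gt K c with hKc | hcK
    · -- b = K
      have hbeq : b = K := min_eq_left hKc
      have h1 : ((S.card : ℝ) - m) ≤ -1 := by
        have : (S.card : ℝ) ≤ (m : ℝ) - 1 := by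
          have := hcard
          have h2 : (S.card : ℝ) ≤ ((m - 1 : ℕ) : ℝ) := by exact_mod_cast this
          have h3 : ((m - 1 : ℕ) : ℝ) = (m : ℝ) - 1 := by
            have : (1 : ℕ) ≤ m := hm
            push_cast [Nat.cast_sub this]
            ring
          linarith
        linarith
      have := HK S
      nlinarith
    · -- b = c
      have hbeq : b = c := min_eq_right hcK.le
      set T : Finset (Fin N) := (Finset.univ.filter (fun i : Fin N => (i : ℕ) < m)).image σ with hT
      have hTcard : T.card = m := by
        rw [hT, Finset.card_image_of_injective _ σ.injective,
          ← Finset.card_image_of_injective _ Fin.val_injective]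
        have : (Finset.univ.filter (fun i : Fin N => (i : ℕ) < m)).image (fun i : Fin N => (i:ℕ))
            = Finset.range m := by
          ext k
          simp only [Finset.mem_image, Finset.mem_filter, Finset.mem_univ, true_and,
            Finset.mem_range]
          constructor
          · rintro ⟨i, hi, rfl⟩; exact hi
          · intro hk; exact ⟨⟨k, lt_of_lt_of_le hk hmN⟩, hk, rfl⟩
        rw [this, Finset.card_range]
      have hST : S ⊆ T := by
        intro j hj
        rcases σ.surjective j with ⟨i, rfl⟩
        have := hmem i hj
        exact Finset.mem_image.2 ⟨i, Finset.mem_filter.2 ⟨Finset.mem_univ _, by omega⟩, rfl⟩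
      have hTS : ∀ j ∈ T \ S, a j = c := by
        intro j hj
        rcases Finset.mem_sdiff.1 hj with ⟨hjT, hjS⟩
        rcases Finset.mem_image.1 hjT with ⟨i, hi, rfl⟩
        have him : (i : ℕ) < m := (Finset.mem_filter.1 hi).2
        have hle : a (σ i) ≤ c := by
          apply hmono
          show (i : Fin N) ≤ ⟨m-1, hmlt⟩
          exact (show (i:ℕ) ≤ m - 1 by omega)
        have hge : b ≤ a (σ i) := by
          by_contra hcon
          exact hjS (by simp [hS]; linarith)
        rw [hbeq] at hge
        linarith
      have hTsum : (0:ℝ) ≤ ∑ j ∈ T, a j := H0 T hTcard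
      have hsplit : ∑ j ∈ T \ S, a j + ∑ j ∈ S, a j = ∑ j ∈ T, a j :=
        Finset.sum_sdiff hST
      have hTSsum : ∑ j ∈ T \ S, a j = ((T.card : ℝ) - S.card) * c := by
        rw [Finset.sum_congr rfl hTS, Finset.sum_const, nsmul_eq_mul,
          Finset.card_sdiff_of_subset hST]
        have : (S.card) ≤ T.card := Finset.card_le_card hST
        push_cast [Nat.cast_sub this]
        ring
      rw [hTcard] at hTSsum
      rw [hbeq]
      nlinarith [hsplit, hTsum, hTSsum]
  -- assemble
  set t := ∑ j, μ j with ht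
  have hsum1 : ∑ j ∈ S, (a j - b) ≤ ∑ j, μ j * (a j - b) := by
    have : ∑ j, μ j * (a j - b) = ∑ j ∈ S, μ j * (a j - b) + ∑ j ∈ Sᶜ, μ j * (a j - b) :=
      (Finset.sum_add_sum_compl S _).symm
    rw [this]
    have h1 : ∑ j ∈ S, (a j - b) ≤ ∑ j ∈ S, μ j * (a j - b) := by
      apply Finset.sum_le_sum
      intro j hj
      have : a j < b := by simpa [hS] using hj
      nlinarith [hμ1 j, hμ0 j]
    have h2 : (0:ℝ) ≤ ∑ j ∈ Sᶜ, μ j * (a j - b) := by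
      apply Finset.sum_nonneg
      intro j hj
      have : ¬ a j < b := by
        have := Finset.mem_compl.1 hj
        simpa [hS] using this
      push_neg at this
      nlinarith [hμ0 j]
    linarith
  have hexp : ∑ j, μ j * (a j - b) = (∑ j, μ j * a j) - b * t := by
    rw [ht, Finset.mul_sum, ← Finset.sum_sub_distrib]
    congr 1; ext j; ring
  have hSexp : ∑ j ∈ S, (a j - b) = (∑ j ∈ S, a j) - (S.card : ℝ) * b := by
    rw [Finset.sum_sub_distrib, Finset.sum_const, nsmul_eq_mul]
  have ht0 : 0 ≤ t := Finset.sum_nonneg (fun j _ => hμ0 j)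
  nlinarith [hkey, hsum1, hexp, hSexp, hμm, hbK]


section CalcFacts

variable {n : ℕ} {V : Set (EuclideanSpace ℝ (Fin n))} (hV : IsOpen V)
  {δ : EuclideanSpace ℝ (Fin n) → ℝ} (hδ : ContDiffOn ℝ 2 δ V)
  {x : EuclideanSpace ℝ (Fin n)} (hx : x ∈ V)

include hV hδ hx

lemma contDiffAt_of_mem : ContDiffAt ℝ 2 δ x := hδ.contDiffAt (hV.mem_nhds hx)

lemma diff_fderiv : DifferentiableAt ℝ (fderiv ℝ δ) x := by
  have h1 : ContDiffAt ℝ 1 (fderiv ℝ δ) x :=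
    (contDiffAt_of_mem hV hδ hx).fderiv_right (by norm_num)
  exact h1.differentiableAt one_ne_zero

lemma hess_eq (v w : EuclideanSpace ℝ (Fin n)) :
    Hess δ x v w = fderiv ℝ (fderiv ℝ δ) x w v := by
  have h1 : HasFDerivAt (fun y => fderiv ℝ δ y v)
      ((ContinuousLinearMap.apply ℝ ℝ v).comp (fderiv ℝ (fderiv ℝ δ) x)) x :=
    (ContinuousLinearMap.apply ℝ ℝ v).hasFDerivAt.comp x (diff_fderiv hV hδ hx).hasFDerivAt
  rw [Hess, h1.fderiv]
  rfl

lemma hess_symm (v w : EuclideanSpace ℝ (Fin n)) :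
    fderiv ℝ (fderiv ℝ δ) x v w = fderiv ℝ (fderiv ℝ δ) x w v :=
  ((contDiffAt_of_mem hV hδ hx).isSymmSndFDerivAt (by norm_num)).eq v w

omit hV hδ hx in
lemma inner_gradient_eq (v : EuclideanSpace ℝ (Fin n)) :
    ⟪gradient δ x, v⟫ = fderiv ℝ δ x v := by
  rw [gradient]
  exact InnerProductSpace.toDual_symm_apply

lemma hess_grad_zero (hgrad : ∀ y ∈ V, ‖gradient δ y‖ = 1) (w : EuclideanSpace ℝ (Fin n)) :
    fderiv ℝ (fderiv ℝ δ) x w (gradient δ x) = 0 := by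
  set L : StrongDual ℝ (EuclideanSpace ℝ (Fin n)) →L[ℝ] EuclideanSpace ℝ (Fin n) :=
    ((InnerProductSpace.toDual ℝ
      (EuclideanSpace ℝ (Fin n))).symm.toContinuousLinearEquiv.toContinuousLinearMap) with hL
  set D : EuclideanSpace ℝ (Fin n) →L[ℝ] StrongDual ℝ (EuclideanSpace ℝ (Fin n)) :=
    fderiv ℝ (fderiv ℝ δ) x with hD
  have hG : HasFDerivAt (gradient δ) (L.comp D) x := by
    have h1 := L.hasFDerivAt.comp x (diff_fderiv hV hδ hx).hasFDerivAt
    have h2 : (L ∘ fderiv ℝ δ) = gradient δ := funext fun y => rfl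
    rwa [h2] at h1
  have hs : HasFDerivAt (fun y => ⟪gradient δ y, gradient δ y⟫)
      ((fderivInnerCLM ℝ (gradient δ x, gradient δ x)).comp <|
        (L.comp D).prod (L.comp D)) x := hG.inner ℝ hG
  have hconst : (fun y => ⟪gradient δ y, gradient δ y⟫) =ᶠ[nhds x] fun _ => (1:ℝ) := by
    filter_upwards [hV.mem_nhds hx] with y hy
    have h1 : ‖gradient δ y‖ = 1 := hgrad y hy
    rw [real_inner_self_eq_norm_mul_norm, h1]; norm_num
  have h0 : fderiv ℝ (fun y => ⟪gradient δ y, gradient δ y⟫) x = 0 := by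
    rw [hconst.fderiv_eq]
    exact fderiv_const_apply 1
  rw [hs.fderiv] at h0
  have h2 := congrFun (congrArg DFunLike.coe h0) w
  simp only [ContinuousLinearMap.coe_comp', Function.comp_apply,
    ContinuousLinearMap.prod_apply, fderivInnerCLM_apply, ContinuousLinearMap.zero_apply] at h2
  have h3 : ⟪gradient δ x, L (D w)⟫ = ⟪L (D w), gradient δ x⟫ := real_inner_comm _ _
  have h4 : ⟪L (D w), gradient δ x⟫ = D w (gradient δ x) := by
    rw [hL]
    exact InnerProductSpace.toDual_symm_apply
  rw [h3, h4] at h2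
  linarith

lemma hess_comp {h : ℝ → ℝ} (hh : ContDiff ℝ 2 h) (v w : EuclideanSpace ℝ (Fin n)) :
    Hess (h ∘ δ) x v w
      = deriv (deriv h) (δ x) * (fderiv ℝ δ x w * fderiv ℝ δ x v)
        + deriv h (δ x) * fderiv ℝ (fderiv ℝ δ) x w v := by
  have hd1 : ∀ y (_ : y ∈ V), DifferentiableAt ℝ δ y := fun y hy =>
    ((hδ.contDiffAt (hV.mem_nhds hy)).differentiableAt (by norm_num))
  have hhd : Differentiable ℝ h := hh.differentiable (by norm_num)
  have hderC : ContDiff ℝ 1 (deriv h) := by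
    have h2 : ContDiff ℝ ((1 : ℕ) + 1) h := by exact_mod_cast hh
    exact ((contDiff_succ_iff_deriv).1 h2).2.2
  have hfv : ∀ y (_ : y ∈ V), fderiv ℝ (h ∘ δ) y v = deriv h (δ y) * fderiv ℝ δ y v := by
    intro y hy
    rw [fderiv_comp y (hhd.differentiableAt) (hd1 y hy)]
    simp only [ContinuousLinearMap.coe_comp', Function.comp_apply]
    have h5 : fderiv ℝ h (δ y) (fderiv ℝ δ y v)
        = (fderiv ℝ δ y v) • fderiv ℝ h (δ y) 1 := by
      rw [← map_smul]; norm_num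
    rw [h5, fderiv_apply_one_eq_deriv]; simp [smul_eq_mul]; ring
  have heq : (fun y => fderiv ℝ (h ∘ δ) y v)
      =ᶠ[nhds x] (fun y => deriv h (δ y) * fderiv ℝ δ y v) := by
    filter_upwards [hV.mem_nhds hx] with y hy using hfv y hy
  have hA : HasFDerivAt (fun y => deriv h (δ y))
      ((deriv (deriv h) (δ x)) • fderiv ℝ δ x) x := by
    have h1 : HasDerivAt (deriv h) (deriv (deriv h) (δ x)) (δ x) :=
      ((hderC.differentiable one_ne_zero) (δ x)).hasDerivAt
    exact h1.comp_hasFDerivAt x (hd1 x hx).hasFDerivAt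
  have hB : HasFDerivAt (fun y => fderiv ℝ δ y v)
      ((ContinuousLinearMap.apply ℝ ℝ v).comp (fderiv ℝ (fderiv ℝ δ) x)) x :=
    (ContinuousLinearMap.apply ℝ ℝ v).hasFDerivAt.comp x (diff_fderiv hV hδ hx).hasFDerivAt
  have hAB : HasFDerivAt (fun y => deriv h (δ y) * fderiv ℝ δ y v) _ x := hA.mul hB
  rw [Hess, heq.fderiv_eq, hAB.fderiv]
  simp only [ContinuousLinearMap.add_apply, ContinuousLinearMap.coe_smul', Pi.smul_apply,
    ContinuousLinearMap.coe_comp', Function.comp_apply, ContinuousLinearMap.apply_apply,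
    smul_eq_mul]
  ring

end CalcFacts

set_option maxHeartbeats 1000000 in
theorem comp_convexification_isMPSH {n m : ℕ} (hn : 2 ≤ n) (hm : 1 ≤ m)
    (hmn : m ≤ n - 1)
    (V : Set (EuclideanSpace ℝ (Fin n))) (hV : IsOpen V)
    (δ : EuclideanSpace ℝ (Fin n) → ℝ) (hδ : ContDiffOn ℝ 2 δ V)
    (hgrad : ∀ x ∈ V, ‖gradient δ x‖ = 1)
    (K : ℝ) (hK : 0 ≤ K)
    (h1 : ∀ x ∈ V, ∀ v : Fin m → EuclideanSpace ℝ (Fin n), Orthonormal ℝ v →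
        (∀ i, ⟪gradient δ x, v i⟫ = 0) → 0 ≤ ∑ i, Hess δ x (v i) (v i))
    (h2 : ∀ x ∈ V, ∀ k : ℕ, ∀ v : Fin k → EuclideanSpace ℝ (Fin n),
        Orthonormal ℝ v → (∀ i, ⟪gradient δ x, v i⟫ = 0) →
        -K ≤ ∑ i, Hess δ x (v i) (v i))
    (h : ℝ → ℝ) (hh : ContDiff ℝ 2 h)
    (hh' : ∀ x ∈ V, 0 ≤ deriv h (δ x))
    (hh'' : ∀ x ∈ V, K * deriv h (δ x) ≤ deriv (deriv h) (δ x)) :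
    ∀ x ∈ V, ∀ v : Fin m → EuclideanSpace ℝ (Fin n), Orthonormal ℝ v →
      0 ≤ ∑ i, Hess (h ∘ δ) x (v i) (v i) := by
  classical
  intro x hx v hv
  set g : EuclideanSpace ℝ (Fin n) := gradient δ x with hgdef
  have hgnorm : ‖g‖ = 1 := hgrad x hx
  have hgne : g ≠ 0 := by
    intro h0; rw [h0] at hgnorm; simp at hgnorm
  have hgg : ⟪g, g⟫ = 1 := by
    rw [real_inner_self_eq_norm_mul_norm, hgnorm]; norm_num
  set H : Submodule ℝ (EuclideanSpace ℝ (Fin n)) := (ℝ ∙ g)ᗮ with hHdef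
  haveI hfact : Fact (Module.finrank ℝ (EuclideanSpace ℝ (Fin n)) = (n - 1) + 1) :=
    ⟨by rw [finrank_euclideanSpace_fin]; omega⟩
  have hNrank : Module.finrank ℝ H = n - 1 := Submodule.finrank_orthogonal_span_singleton hgne
  set c : Fin m → ℝ := fun i => ⟪g, v i⟫ with hcdef
  have hwmem : ∀ i, v i - c i • g ∈ H := by
    intro i
    rw [hHdef, Submodule.mem_orthogonal_singleton_iff_inner_left]
    rw [inner_sub_left, real_inner_smul_left, hgg, real_inner_comm]
    simp [hcdef]
  set w : Fin m → H := fun i => ⟨v i - c i • g, hwmem i⟩ with hwdef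
  set D : EuclideanSpace ℝ (Fin n) →L[ℝ] (EuclideanSpace ℝ (Fin n) →L[ℝ] ℝ) :=
    fderiv ℝ (fderiv ℝ δ) x with hDdef
  have hzero : ∀ u, D u g = 0 := fun u => hess_grad_zero hV hδ hx hgrad u
  have hzero' : ∀ u, D g u = 0 := fun u => by
    rw [hDdef, hess_symm hV hδ hx g u]; exact hzero u
  -- the operator T
  set T : H →L[ℝ] H := ∑ i, (innerSL ℝ (w i)).smulRight (w i) with hTdef
  have hTapp : ∀ u : H, T u = ∑ i, ⟪w i, u⟫ • w i := by
    intro u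
    rw [hTdef]
    simp [ContinuousLinearMap.sum_apply]
  have hTinner : ∀ u u' : H, ⟪T u, u'⟫ = ∑ i, ⟪w i, u⟫ * ⟪w i, u'⟫ := by
    intro u u'
    rw [hTapp, sum_inner]
    exact Finset.sum_congr rfl fun i _ => by rw [real_inner_smul_left]
  have hTsymm : (T : H →ₗ[ℝ] H).IsSymmetric := by
    intro u u'
    show ⟪T u, u'⟫ = ⟪u, T u'⟫
    rw [hTinner, real_inner_comm (T u') u, hTinner]
    exact Finset.sum_congr rfl fun i _ => by ring
  set b := hTsymm.eigenvectorBasis hNrank with hbdef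
  set μ := hTsymm.eigenvalues hNrank with hμdef
  have heig : ∀ j, T (b j) = μ j • b j := fun j =>
    Module.End.mem_eigenspace_iff.mp (hTsymm.hasEigenvector_eigenvectorBasis hNrank j).1
  set e : Fin (n-1) → EuclideanSpace ℝ (Fin n) := fun j => (b j : EuclideanSpace ℝ (Fin n))
    with hedef
  have he : Orthonormal ℝ e := H.subtypeₗᵢ.orthonormal_comp_iff.mpr b.orthonormal
  have hperp : ∀ j, ⟪g, e j⟫ = 0 := by
    intro j
    have hmem : (b j : EuclideanSpace ℝ (Fin n)) ∈ (ℝ ∙ g)ᗮ := (b j).2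
    rw [Submodule.mem_orthogonal_singleton_iff_inner_left] at hmem
    calc ⟪g, e j⟫ = ⟪e j, g⟫ := real_inner_comm (e j) g
      _ = 0 := hmem
  set a : Fin (n-1) → ℝ := fun j => Hess δ x (e j) (e j) with hadef
  have haD : ∀ j, a j = D (e j) (e j) := fun j => hess_eq hV hδ hx (e j) (e j)
  -- coefficients
  have hwexp : ∀ i, (w i : EuclideanSpace ℝ (Fin n)) = ∑ j, ⟪b j, w i⟫ • e j := by
    intro i
    have hrepr := b.sum_repr' (w i)
    have := congrArg (fun z : H => (z : EuclideanSpace ℝ (Fin n))) hrepr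
    simp only [Submodule.coe_sum, Submodule.coe_smul] at this
    exact this.symm
  have hTb : ∀ j k, ∑ i, ⟪b j, w i⟫ * ⟪b k, w i⟫ = if j = k then μ j else 0 := by
    intro j k
    have h1' : ⟪T (b j), b k⟫ = ∑ i, ⟪w i, b j⟫ * ⟪w i, b k⟫ := hTinner _ _
    have h2' : ⟪T (b j), b k⟫ = μ j * ⟪b j, b k⟫ := by
      rw [heig j, real_inner_smul_left]
    have h3' : ⟪(b j : H), b k⟫ = if j = k then (1:ℝ) else 0 :=
      orthonormal_iff_ite.mp b.orthonormal j k
    rw [h3'] at h2'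
    have h4' : ∑ i, ⟪b j, w i⟫ * ⟪b k, w i⟫ = ∑ i, ⟪w i, (b j : H)⟫ * ⟪w i, b k⟫ :=
      Finset.sum_congr rfl fun i _ => by
        rw [real_inner_comm (w i) (b j : H), real_inner_comm (w i) (b k : H)]
    rw [h4', ← h1', h2']
    split_ifs <;> simp
  -- μ properties
  have hμeq : ∀ j, μ j = ∑ i, ⟪b j, w i⟫ ^ 2 := by
    intro j
    have h5 := hTb j j
    rw [if_pos rfl] at h5
    rw [← h5]
    exact Finset.sum_congr rfl fun i _ => (pow_two _).symm
  have hμ0 : ∀ j, 0 ≤ μ j := fun j => by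
    rw [hμeq]; exact Finset.sum_nonneg fun i _ => sq_nonneg _
  have hegzero : ∀ j, ⟪e j, g⟫ = 0 := by
    intro j
    calc ⟪e j, g⟫ = ⟪g, e j⟫ := (real_inner_comm (e j) g).symm
      _ = 0 := hperp j
  have hbw_inner : ∀ j i, ⟪b j, w i⟫ = ⟪e j, v i⟫ := by
    intro j i
    rw [Submodule.coe_inner]
    show ⟪e j, v i - c i • g⟫ = ⟪e j, v i⟫
    rw [inner_sub_right, real_inner_smul_right, hegzero j]
    ring
  have hnorme : ∀ j, ‖e j‖ = 1 := fun j => he.1 j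
  have hμ1 : ∀ j, μ j ≤ 1 := by
    intro j
    rw [hμeq]
    calc ∑ i, ⟪b j, w i⟫^2 = ∑ i, ‖⟪v i, e j⟫‖^2 := by
          refine Finset.sum_congr rfl fun i _ => ?_
          rw [hbw_inner j i, real_inner_comm (v i) (e j), Real.norm_eq_abs, sq_abs]
      _ ≤ ‖e j‖^2 := hv.sum_inner_products_le (e j)
      _ = 1 := by rw [hnorme j]; norm_num
  have hwnormsq : ∀ i, ⟪w i, w i⟫ = 1 - c i^2 := by
    intro i
    rw [Submodule.coe_inner]
    show ⟪v i - c i • g, v i - c i • g⟫ = _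
    have hvv : ⟪v i, v i⟫ = 1 := by
      rw [real_inner_self_eq_norm_mul_norm, hv.1 i]; norm_num
    have hgv : ⟪g, v i⟫ = c i := rfl
    have hvg : ⟪v i, g⟫ = c i := by
      rw [real_inner_comm g (v i)]
    rw [inner_sub_left, inner_sub_right, inner_sub_right, real_inner_smul_left,
      real_inner_smul_left, real_inner_smul_right, real_inner_smul_right, hgg, hvv, hvg, hgv]
    ring
  have hsumμ : ∑ j, μ j = (m : ℝ) - ∑ i, c i^2 := by
    have h1' : ∑ j, μ j = ∑ i, ⟪w i, w i⟫ := by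
      rw [Finset.sum_congr rfl fun j _ => hμeq j, Finset.sum_comm]
      refine Finset.sum_congr rfl fun i _ => ?_
      calc ∑ j, ⟪b j, w i⟫^2 = ∑ j, ⟪w i, b j⟫ * ⟪b j, w i⟫ := by
            refine Finset.sum_congr rfl fun j _ => ?_
            rw [pow_two]
            congr 1
            exact (real_inner_comm (b j) (w i)).symm
        _ = ⟪w i, w i⟫ := b.sum_inner_mul_inner (w i) (w i)
    rw [h1', Finset.sum_congr rfl fun i _ => hwnormsq i, Finset.sum_sub_distrib]
    simp
  -- expansion of D on w i
  have hD2w : ∀ i, D (w i : EuclideanSpace ℝ (Fin n)) (w i : EuclideanSpace ℝ (Fin n))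
      = ∑ j, ∑ k, ⟪b j, w i⟫ * ⟪b k, w i⟫ * D (e j) (e k) := by
    intro i
    rw [hwexp i]
    simp only [map_sum, map_smul, ContinuousLinearMap.sum_apply,
      ContinuousLinearMap.smul_apply, ContinuousLinearMap.coe_sum', Finset.sum_apply,
      smul_eq_mul, Finset.mul_sum]
    refine Finset.sum_congr rfl fun j _ => Finset.sum_congr rfl fun k _ => ?_
    have hsy : D (e k) (e j) = D (e j) (e k) := hess_symm hV hδ hx (e k) (e j)
    rw [hsy]
    ring
  have hswap : ∑ i, D (w i : EuclideanSpace ℝ (Fin n)) (w i : EuclideanSpace ℝ (Fin n))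
      = ∑ j, μ j * D (e j) (e j) := by
    rw [Finset.sum_congr rfl fun i _ => hD2w i, Finset.sum_comm]
    refine Finset.sum_congr rfl fun j _ => ?_
    rw [Finset.sum_comm]
    have h5 : ∀ k, ∑ i, ⟪b j, w i⟫ * ⟪b k, w i⟫ * D (e j) (e k)
        = (if j = k then μ j else 0) * D (e j) (e k) := by
      intro k
      rw [← Finset.sum_mul, hTb j k]
    rw [Finset.sum_congr rfl fun k _ => h5 k]
    rw [Finset.sum_eq_single j]
    · rw [if_pos rfl]
    · intro k _ hk
      rw [if_neg (fun hc => hk hc.symm), zero_mul]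
    · intro hj; exact absurd (Finset.mem_univ j) hj
  have hD2v : ∀ i, D (v i) (v i)
      = D (w i : EuclideanSpace ℝ (Fin n)) (w i : EuclideanSpace ℝ (Fin n)) := by
    intro i
    have hvi : v i = c i • g + (w i : EuclideanSpace ℝ (Fin n)) := by
      show v i = c i • g + (v i - c i • g)
      abel
    conv_lhs => rw [hvi]
    simp only [map_add, map_smul, ContinuousLinearMap.add_apply,
      ContinuousLinearMap.smul_apply, smul_eq_mul, hzero, hzero']
    try ring
  -- final computation
  have hfv : ∀ u, fderiv ℝ δ x u = ⟪g, u⟫ := fun u => (inner_gradient_eq u).symm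
  have hcomp : ∀ i, Hess (h ∘ δ) x (v i) (v i)
      = deriv (deriv h) (δ x) * (c i * c i) + deriv h (δ x) * D (v i) (v i) := by
    intro i
    rw [hess_comp hV hδ hx hh (v i) (v i), hfv (v i)]
    try rfl
  have hsum : ∑ i, Hess (h ∘ δ) x (v i) (v i)
      = deriv (deriv h) (δ x) * (∑ i, c i^2)
        + deriv h (δ x) * (∑ j, μ j * a j) := by
    rw [Finset.sum_congr rfl fun i _ => hcomp i, Finset.sum_add_distrib,
      ← Finset.mul_sum, ← Finset.mul_sum]
    congr 1
    · congr 1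
      exact Finset.sum_congr rfl fun i _ => by rw [pow_two]
    · congr 1
      rw [Finset.sum_congr rfl fun i _ => hD2v i, hswap]
      exact Finset.sum_congr rfl fun j _ => by rw [haD j]
  -- combinatorial lemma hypotheses
  have H0 : ∀ S : Finset (Fin (n-1)), S.card = m → 0 ≤ ∑ j ∈ S, a j := by
    intro S hS
    have φ := S.orderIsoOfFin hS
    have hortho : Orthonormal ℝ (fun i : Fin m => e (φ i)) :=
      he.comp (fun i => (φ i : Fin (n-1))) (fun i i' hii => φ.injective (Subtype.ext hii))
    have hperp' : ∀ i : Fin m, ⟪g, e (φ i)⟫ = 0 := fun i => hperp _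
    have h6 := h1 x hx (fun i => e (φ i)) hortho hperp'
    have hsum' : ∑ j ∈ S, a j = ∑ i : Fin m, a ((φ i : Fin (n-1))) := by
      rw [← Finset.sum_attach S a, ← Finset.univ_eq_attach]
      exact (Fintype.sum_equiv φ.toEquiv _ _ (fun i => rfl)).symm
    rw [hsum']
    exact h6
  have HKh : ∀ S : Finset (Fin (n-1)), -K ≤ ∑ j ∈ S, a j := by
    intro S
    have φ := S.orderIsoOfFin rfl
    have hortho : Orthonormal ℝ (fun i : Fin S.card => e (φ i)) :=
      he.comp (fun i => (φ i : Fin (n-1))) (fun i i' hii => φ.injective (Subtype.ext hii))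
    have hperp' : ∀ i : Fin S.card, ⟪g, e (φ i)⟫ = 0 := fun i => hperp _
    have h6 := h2 x hx S.card (fun i => e (φ i)) hortho hperp'
    have hsum' : ∑ j ∈ S, a j = ∑ i : Fin S.card, a ((φ i : Fin (n-1))) := by
      rw [← Finset.sum_attach S a, ← Finset.univ_eq_attach]
      exact (Fintype.sum_equiv φ.toEquiv _ _ (fun i => rfl)).symm
    rw [hsum']
    exact h6
  have hle : ∑ j, μ j ≤ (m : ℝ) := by
    have hC : 0 ≤ ∑ i, c i^2 := Finset.sum_nonneg fun i _ => sq_nonneg _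
    rw [hsumμ]; linarith
  have hcomb := comb_core hm hmn K hK a H0 HKh μ hμ0 hμ1 hle
  rw [hsumμ] at hcomb
  have hmm : (m : ℝ) - ((m : ℝ) - ∑ i, c i^2) = ∑ i, c i^2 := by ring
  rw [hmm] at hcomb
  -- conclude
  rw [hsum]
  have hC : 0 ≤ ∑ i, c i^2 := Finset.sum_nonneg fun i _ => sq_nonneg _
  have hKB := hh'' x hx
  have hB0 := hh' x hx
  nlinarith [mul_le_mul_of_nonneg_right hKB hC, mul_nonneg hB0 hcomb]
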